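/- Let c : ℕ → ℂ be a function with c(1) = 0, and suppose there exist five pairwise coprime positive integers l, m, n, u, v with c(l)·c(m)·c(n)·c(u)·c(v) ≠ 0. Suppose c admits two decompositions c(k) = a·(M(k) − N(k)) and c(k) = a'·(M'(k) − N'(k)) for all k ≥ 1, where a, a' ∈ ℂ and M, N, M', N' : ℕ → ℂ are multiplicative arithmetic functions (each taking the value 1 at 1 and satisfying f(jk) = f(j)f(k) for coprime j, k). Then either (a = a', M = M' and N = N') or (a = −a', M = N' and N = M'). -/

import Mathlib

/-- `f : ℕ → ℂ` is a multiplicative arithmetic function: `f(1) = 1` and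
`f(jk) = f(j)f(k)` for coprime positive integers `j, k`. -/
def IsMultFn (f : ℕ → ℂ) : Prop :=
  f 1 = 1 ∧ ∀ j k : ℕ, 0 < j → 0 < k → Nat.Coprime j k → f (j * k) = f j * f k

lemma multfn_ext {f g : ℕ → ℂ} (hf : IsMultFn f) (hg : IsMultFn g)
    (h : ∀ p r : ℕ, p.Prime → f (p ^ r) = g (p ^ r)) :
    ∀ k : ℕ, 1 ≤ k → f k = g k := by
  intro k
  induction k using Nat.recOnPosPrimePosCoprime with
  | prime_pow p r hp hr => exact fun _ => h p r hp
  | zero => omega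
  | one => intro _; rw [hf.1, hg.1]
  | coprime a b ha hb hab iha ihb =>
      intro _
      rw [hf.2 a b (by omega) (by omega) hab, hg.2 a b (by omega) (by omega) hab,
        iha (by omega), ihb (by omega)]

lemma pair_rel (c : ℕ → ℂ) (a : ℂ) (M N : ℕ → ℂ) (hM : IsMultFn M) (hN : IsMultFn N)
    (hdec : ∀ k : ℕ, 1 ≤ k → c k = a * (M k - N k)) {j k : ℕ} (hj : 0 < j) (hk : 0 < k)
    (hjk : Nat.Coprime j k) :
    (M j + N j) * c k + (M k + N k) * c j = 2 * c (j * k) := by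
  rw [hdec j hj, hdec k hk, hdec (j * k) (Nat.mul_pos hj hk),
    hM.2 j k hj hk hjk, hN.2 j k hj hk hjk]
  ring

lemma triple_rel (c : ℕ → ℂ) (a : ℂ) (M N : ℕ → ℂ) (hM : IsMultFn M) (hN : IsMultFn N)
    (hdec : ∀ k : ℕ, 1 ≤ k → c k = a * (M k - N k)) {j k t : ℕ}
    (hj : 0 < j) (hk : 0 < k) (ht : 0 < t)
    (hjk : Nat.Coprime j k) (hjt : Nat.Coprime j t) (hkt : Nat.Coprime k t) :
    a ^ 2 * (4 * c (j * k * t) -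
      ((M j + N j) * (M k + N k) * c t + (M j + N j) * c k * (M t + N t)
        + c j * (M k + N k) * (M t + N t))) = c j * c k * c t := by
  have hjk' : 0 < j * k := Nat.mul_pos hj hk
  have hcop : Nat.Coprime (j * k) t := Nat.Coprime.mul hjt hkt
  rw [hdec j hj, hdec k hk, hdec t ht, hdec (j * k * t) (Nat.mul_pos hjk' ht),
    hM.2 (j * k) t hjk' ht hcop, hN.2 (j * k) t hjk' ht hcop,
    hM.2 j k hj hk hjk, hN.2 j k hj hk hjk]
  ring

lemma helper (c : ℕ → ℂ) (a : ℂ) (ha : a ≠ 0) (M N A B : ℕ → ℂ)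
    (hM : IsMultFn M) (hN : IsMultFn N) (hA : IsMultFn A) (hB : IsMultFn B)
    (hd1 : ∀ k : ℕ, 1 ≤ k → c k = a * (M k - N k))
    (hd2 : ∀ k : ℕ, 1 ≤ k → c k = a * (A k - B k))
    (l m : ℕ) (hl : 0 < l) (hm : 0 < m) (hlm : Nat.Coprime l m)
    (hcl : c l ≠ 0) (hcm : c m ≠ 0)
    (hMl : M l = A l) (hNl : N l = B l) (hMm : M m = A m) (hNm : N m = B m) :
    ∀ k : ℕ, 1 ≤ k → M k = A k ∧ N k = B k := by
  have hdiff : ∀ k : ℕ, 1 ≤ k → M k - N k = A k - B k := by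
    intro k hk
    apply mul_left_cancel₀ ha
    rw [← hd1 k hk, ← hd2 k hk]
  have hF : ∀ j k : ℕ, 0 < j → 0 < k → Nat.Coprime j k →
      ((M j + N j) - (A j + B j)) * c k + ((M k + N k) - (A k + B k)) * c j = 0 := by
    intro j k hj hk hjk
    linear_combination pair_rel c a M N hM hN hd1 hj hk hjk
      - pair_rel c a A B hA hB hd2 hj hk hjk
  have hpp : ∀ p r : ℕ, p.Prime → M (p ^ r) = A (p ^ r) ∧ N (p ^ r) = B (p ^ r) := by
    intro p r hp
    obtain ⟨w, hw, hwcop, hcw, hMw, hNw⟩ :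
        ∃ w, 0 < w ∧ Nat.Coprime (p ^ r) w ∧ c w ≠ 0 ∧ M w = A w ∧ N w = B w := by
      by_cases hpl : p ∣ l
      · have hpm : ¬ p ∣ m := fun hpm => hp.one_lt.ne'
          (Nat.dvd_one.mp (hlm ▸ Nat.dvd_gcd hpl hpm))
        exact ⟨m, hm, Nat.Coprime.pow_left r ((Nat.Prime.coprime_iff_not_dvd hp).mpr hpm),
          hcm, hMm, hNm⟩
      · exact ⟨l, hl, Nat.Coprime.pow_left r ((Nat.Prime.coprime_iff_not_dvd hp).mpr hpl),
          hcl, hMl, hNl⟩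
    have hq : 0 < p ^ r := pow_pos hp.pos r
    have hFq := hF (p ^ r) w hq hw hwcop
    have h0 : ((M (p ^ r) + N (p ^ r)) - (A (p ^ r) + B (p ^ r))) * c w = 0 := by
      linear_combination hFq - c (p ^ r) * hMw - c (p ^ r) * hNw
    have hsum := (mul_eq_zero.mp h0).resolve_right hcw
    have hd := hdiff (p ^ r) hq
    constructor
    · linear_combination (hsum + hd) / 2
    · linear_combination (hsum - hd) / 2
  intro k hk
  exact ⟨multfn_ext hM hA (fun p r hp => (hpp p r hp).1) k hk,
    multfn_ext hN hB (fun p r hp => (hpp p r hp).2) k hk⟩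

/-- Uniqueness of the decomposition of a Dirichlet series into a difference of two
Euler products: if `c(1) = 0`, there are five pairwise coprime positive integers on
which `c` does not vanish, and `c(k) = a(M(k) − N(k)) = a'(M'(k) − N'(k))` for all
`k ≥ 1` with `M, N, M', N'` multiplicative, then either `a = a'`, `M = M'`, `N = N'`,
or `a = −a'`, `M = N'`, `N = M'`. -/
theorem unique_difference_decomposition (c : ℕ → ℂ) (hc1 : c 1 = 0)
    (l m n u v : ℕ) (hl : 0 < l) (hm : 0 < m) (hn : 0 < n) (hu : 0 < u) (hv : 0 < v)
    (hcop : List.Pairwise Nat.Coprime [l, m, n, u, v])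
    (hne : c l * c m * c n * c u * c v ≠ 0)
    (a a' : ℂ) (M N M' N' : ℕ → ℂ)
    (hM : IsMultFn M) (hN : IsMultFn N) (hM' : IsMultFn M') (hN' : IsMultFn N')
    (hdec : ∀ k : ℕ, 1 ≤ k → c k = a * (M k - N k))
    (hdec' : ∀ k : ℕ, 1 ≤ k → c k = a' * (M' k - N' k)) :
    (a = a' ∧ (∀ k : ℕ, 1 ≤ k → M k = M' k ∧ N k = N' k)) ∨
    (a = -a' ∧ (∀ k : ℕ, 1 ≤ k → M k = N' k ∧ N k = M' k)) := by
  simp only [List.pairwise_cons, List.mem_cons, List.not_mem_nil, List.mem_singleton,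
    forall_eq_or_imp, forall_eq, List.Pairwise.nil, or_false] at hcop
  obtain ⟨⟨hlm, hln, hlu, hlv⟩, ⟨hmn, hmu, hmv⟩, ⟨hnu, hnv⟩, huv, -⟩ := hcop
  simp only [mul_ne_zero_iff] at hne
  obtain ⟨⟨⟨⟨hcl, hcm⟩, hcn⟩, hcu⟩, hcv⟩ := hne
  have haz : a ≠ 0 := by
    intro h; exact hcl (by rw [hdec l hl, h, zero_mul])
  have key : ∀ j k t : ℕ, 0 < j → 0 < k → 0 < t → Nat.Coprime j k → Nat.Coprime j t →
      Nat.Coprime k t → c k ≠ 0 → c t ≠ 0 → M j + N j = M' j + N' j := by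
    intro j k t hj hk ht hjk hjt hkt hck hct
    have R : ∀ x y : ℕ, 0 < x → 0 < y → Nat.Coprime x y →
        ((M x + N x) - (M' x + N' x)) * c y + ((M y + N y) - (M' y + N' y)) * c x = 0 := by
      intro x y hx hy hxy
      linear_combination pair_rel c a M N hM hN hdec hx hy hxy
        - pair_rel c a' M' N' hM' hN' hdec' hx hy hxy
    have R1 := R j k hj hk hjk
    have R2 := R j t hj ht hjt
    have R3 := R k t hk ht hkt
    have h0 : ((M j + N j) - (M' j + N' j)) * (c k * c t) = 0 := by
      linear_combination (c t / 2) * R1 + (c k / 2) * R2 - (c j / 2) * R3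
    exact sub_eq_zero.mp ((mul_eq_zero.mp h0).resolve_right (mul_ne_zero hck hct))
  have hFl := key l m n hl hm hn hlm hln hmn hcm hcn
  have hFm := key m l n hm hl hn hlm.symm hmn hln hcl hcn
  have hFn := key n l m hn hl hm hln.symm hmn.symm hlm hcl hcm
  have hT := triple_rel c a M N hM hN hdec hl hm hn hlm hln hmn
  have hT' := triple_rel c a' M' N' hM' hN' hdec' hl hm hn hlm hln hmn
  rw [← hFl, ← hFm, ← hFn] at hT'
  have hTne : (4 * c (l * m * n) -
      ((M l + N l) * (M m + N m) * c n + (M l + N l) * c m * (M n + N n)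
        + c l * (M m + N m) * (M n + N n))) ≠ 0 := by
    intro h0
    rw [h0, mul_zero] at hT
    exact (mul_ne_zero (mul_ne_zero hcl hcm) hcn) hT.symm
  have hsq : a ^ 2 = a' ^ 2 := mul_right_cancel₀ hTne (hT.trans hT'.symm)
  have hcases : a = a' ∨ a = -a' := by
    have h0 : (a - a') * (a + a') = 0 := by linear_combination hsq
    rcases mul_eq_zero.mp h0 with h | h
    · exact Or.inl (sub_eq_zero.mp h)
    · exact Or.inr (by linear_combination h)
  rcases hcases with ha | ha
  · left
    refine ⟨ha, ?_⟩
    have hd2 : ∀ k : ℕ, 1 ≤ k → c k = a * (M' k - N' k) := by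
      intro k hk; rw [ha]; exact hdec' k hk
    have hdiff : ∀ k : ℕ, 1 ≤ k → M k - N k = M' k - N' k := fun k hk =>
      mul_left_cancel₀ haz (by rw [← hdec k hk, ← hd2 k hk])
    exact helper c a haz M N M' N' hM hN hM' hN' hdec hd2 l m hl hm hlm hcl hcm
      (by linear_combination (hFl + hdiff l hl) / 2)
      (by linear_combination (hFl - hdiff l hl) / 2)
      (by linear_combination (hFm + hdiff m hm) / 2)
      (by linear_combination (hFm - hdiff m hm) / 2)
  · right
    refine ⟨ha, ?_⟩
    have hd2 : ∀ k : ℕ, 1 ≤ k → c k = a * (N' k - M' k) := by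
      intro k hk; rw [ha]; linear_combination hdec' k hk
    have hdiff : ∀ k : ℕ, 1 ≤ k → M k - N k = N' k - M' k := fun k hk =>
      mul_left_cancel₀ haz (by rw [← hdec k hk, ← hd2 k hk])
    exact helper c a haz M N N' M' hM hN hN' hM' hdec hd2 l m hl hm hlm hcl hcm
      (by linear_combination (hFl + hdiff l hl) / 2)
      (by linear_combination (hFl - hdiff l hl) / 2)
      (by linear_combination (hFm + hdiff m hm) / 2)
      (by linear_combination (hFm - hdiff m hm) / 2)
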